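/- Suppose L is μ-PL (i.e., (1/2)||∇L(θ)||^2 ≥ μ(L(θ) - L*) for all θ) and l-smooth, and the stochastic gradient g satisfies E[g] = ∇L(θ) and E[||g - ∇L(θ)||^2] ≤ (α/B)(L(θ) - L*). Then SGD with step size η = min(1/l, μB/(lα)) satisfies E[L(θ_{t+1})] - L* ≤ (1 - min(μ/(2l), μ^2 B/(2lα))) (E[L(θ_t)] - L*). -/

import Mathlib

open MeasureTheory RealInnerProductSpace

lemma descent_lemma {E : Type*} [NormedAddCommGroup E] [InnerProductSpace ℝ E] [CompleteSpace E]
    (L : E → ℝ) (l : ℝ) (hl : 0 ≤ l) (hdiff : Differentiable ℝ L)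
    (hlip : ∀ x y, ‖gradient L x - gradient L y‖ ≤ l * ‖x - y‖) (x v : E) :
    L (x + v) ≤ L x + ⟪gradient L x, v⟫ + l / 2 * ‖v‖ ^ 2 := by
  have hderiv : ∀ t : ℝ, HasDerivAt (fun t : ℝ => L (x + t • v))
      ⟪gradient L (x + t • v), v⟫ t := by
    intro t
    have hc : HasDerivAt (fun t : ℝ => x + t • v) v t := by
      simpa using ((hasDerivAt_id t).smul_const v).const_add x
    have := ((hdiff (x + t • v)).hasGradientAt.hasFDerivAt).comp_hasDerivAt t hc
    simpa [InnerProductSpace.toDual_apply_apply, Function.comp_def] using this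
  have hcontg : Continuous (gradient L) := by
    have : LipschitzWith ⟨l, hl⟩ (gradient L) := by
      apply LipschitzWith.of_dist_le_mul
      intro a b
      rw [dist_eq_norm, dist_eq_norm]; exact hlip a b
    exact this.continuous
  have hcont : Continuous fun t : ℝ => ⟪gradient L (x + t • v), v⟫ := by
    exact (Continuous.inner (hcontg.comp (by continuity)) continuous_const)
  have hint : ∀ a b : ℝ, IntervalIntegrable (fun t : ℝ => ⟪gradient L (x + t • v), v⟫)
      MeasureTheory.volume a b := fun a b => hcont.intervalIntegrable a b
  have hFTC : L (x + v) - L x = ∫ t in (0:ℝ)..1, ⟪gradient L (x + t • v), v⟫ := by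
    have := intervalIntegral.integral_eq_sub_of_hasDerivAt
      (f := fun t : ℝ => L (x + t • v)) (f' := fun t => ⟪gradient L (x + t • v), v⟫)
      (fun t _ => hderiv t) (hint 0 1)
    simp at this ⊢
    linarith [this]
  have hmono : (∫ t in (0:ℝ)..1, ⟪gradient L (x + t • v), v⟫) ≤
      ∫ t in (0:ℝ)..1, (⟪gradient L x, v⟫ + l * t * ‖v‖ ^ 2) := by
    apply intervalIntegral.integral_mono_on zero_le_one (hint 0 1)
    · exact Continuous.intervalIntegrable (by continuity) 0 1
    · intro t ht
      have h1 : ⟪gradient L (x + t • v) - gradient L x, v⟫ ≤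
          ‖gradient L (x + t • v) - gradient L x‖ * ‖v‖ := real_inner_le_norm _ _
      have h2 : ‖gradient L (x + t • v) - gradient L x‖ ≤ l * (t * ‖v‖) := by
        have := hlip (x + t • v) x
        simpa [norm_smul, abs_of_nonneg ht.1] using this
      have h3 : ⟪gradient L (x + t • v) - gradient L x, v⟫ ≤ l * t * ‖v‖ ^ 2 := by
        calc _ ≤ ‖gradient L (x + t • v) - gradient L x‖ * ‖v‖ := h1
        _ ≤ l * (t * ‖v‖) * ‖v‖ :=
            mul_le_mul_of_nonneg_right h2 (norm_nonneg _)
        _ = l * t * ‖v‖ ^ 2 := by ring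
      have h4 : ⟪gradient L (x + t • v) - gradient L x, v⟫ =
          ⟪gradient L (x + t • v), v⟫ - ⟪gradient L x, v⟫ := inner_sub_left _ _ _
      linarith
  have hval : (∫ t in (0:ℝ)..1, (⟪gradient L x, v⟫ + l * t * ‖v‖ ^ 2)) =
      ⟪gradient L x, v⟫ + l / 2 * ‖v‖ ^ 2 := by
    have heq : (fun t : ℝ => ⟪gradient L x, v⟫ + l * t * ‖v‖ ^ 2)
        = fun t : ℝ => ⟪gradient L x, v⟫ + (l * ‖v‖ ^ 2) * t := by ext t; ring
    rw [show (∫ t in (0:ℝ)..1, (⟪gradient L x, v⟫ + l * t * ‖v‖ ^ 2))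
        = ∫ t in (0:ℝ)..1, (⟪gradient L x, v⟫ + (l * ‖v‖ ^ 2) * t) from by rw [heq]]
    rw [intervalIntegral.integral_add intervalIntegrable_const
      (Continuous.intervalIntegrable (by continuity) 0 1),
      intervalIntegral.integral_const_mul, integral_id]
    simp
    ring
  linarith [hFTC, hmono, hval ▸ hmono]

set_option maxHeartbeats 1000000 in
theorem stmt7 {d : ℕ} {Ω : Type*} [MeasurableSpace Ω] (P : Measure Ω)
    [IsProbabilityMeasure P]
    (L : EuclideanSpace ℝ (Fin d) → ℝ) (l μpl α B Lstar : ℝ)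
    (hl : 0 < l) (hμ : 0 < μpl) (hα : 0 < α) (hB : 0 < B)
    (hstar : ∀ x, Lstar ≤ L x)
    (hdiff : Differentiable ℝ L)
    (hlip : ∀ x y, ‖gradient L x - gradient L y‖ ≤ l * ‖x - y‖)
    (hPL : ∀ x, μpl * (L x - Lstar) ≤ (1 / 2) * ‖gradient L x‖ ^ 2)
    (θ : EuclideanSpace ℝ (Fin d)) (g : Ω → EuclideanSpace ℝ (Fin d))
    (hgint : Integrable g P)
    (hg2 : Integrable (fun ω => ‖g ω‖ ^ 2) P)
    (hLint : Integrable (fun ω => L (θ - min (1 / l) (μpl * B / (l * α)) • g ω)) P)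
    (hmean : (∫ ω, g ω ∂P) = gradient L θ)
    (hvar : (∫ ω, ‖g ω - gradient L θ‖ ^ 2 ∂P) ≤ (α / B) * (L θ - Lstar)) :
    (∫ ω, L (θ - min (1 / l) (μpl * B / (l * α)) • g ω) ∂P) - Lstar ≤
      (1 - min (μpl / (2 * l)) (μpl ^ 2 * B / (2 * l * α))) * (L θ - Lstar) := by
  set η := min (1 / l) (μpl * B / (l * α)) with hηdef
  set G := gradient L θ with hGdef
  have hη1 : η ≤ 1 / l := min_le_left _ _
  have hη2 : η ≤ μpl * B / (l * α) := min_le_right _ _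
  have hηpos : 0 < η := lt_min (by positivity) (by positivity)
  have hΔ : 0 ≤ L θ - Lstar := sub_nonneg.mpr (hstar θ)
  -- pointwise descent inequality
  have hpt : ∀ ω, L (θ - η • g ω) ≤
      L θ + (-η * ⟪G, g ω⟫ + l / 2 * η ^ 2 * ‖g ω‖ ^ 2) := by
    intro ω
    have hd := descent_lemma L l hl.le hdiff hlip θ (-(η • g ω))
    rw [show θ + -(η • g ω) = θ - η • g ω from by abel] at hd
    have h2 : ⟪G, -(η • g ω)⟫ = -η * ⟪G, g ω⟫ := by
      rw [inner_neg_right, real_inner_smul_right]; ring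
    have h3 : ‖-(η • g ω)‖ ^ 2 = η ^ 2 * ‖g ω‖ ^ 2 := by
      rw [norm_neg, norm_smul, mul_pow, Real.norm_eq_abs, sq_abs]
    rw [h2, h3] at hd
    linarith
  have hinner : Integrable (fun ω => ⟪G, g ω⟫) P := hgint.const_inner G
  have hRHSint : Integrable
      (fun ω => L θ + (-η * ⟪G, g ω⟫ + l / 2 * η ^ 2 * ‖g ω‖ ^ 2)) P := by
    apply (integrable_const (L θ)).add
    exact (hinner.const_mul (-η)).add (hg2.const_mul (l / 2 * η ^ 2))
  have hImono : (∫ ω, L (θ - η • g ω) ∂P) ≤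
      ∫ ω, (L θ + (-η * ⟪G, g ω⟫ + l / 2 * η ^ 2 * ‖g ω‖ ^ 2)) ∂P :=
    integral_mono hLint hRHSint hpt
  have hEinner : (∫ ω, ⟪G, g ω⟫ ∂P) = ‖G‖ ^ 2 := by
    rw [integral_inner hgint, hmean]
    exact real_inner_self_eq_norm_sq G
  have hERHS : (∫ ω, (L θ + (-η * ⟪G, g ω⟫ + l / 2 * η ^ 2 * ‖g ω‖ ^ 2)) ∂P)
      = L θ + (-η * ‖G‖ ^ 2 + l / 2 * η ^ 2 * ∫ ω, ‖g ω‖ ^ 2 ∂P) := by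
    have h2 : Integrable (fun ω => -η * ⟪G, g ω⟫ + l / 2 * η ^ 2 * ‖g ω‖ ^ 2) P :=
      (hinner.const_mul (-η)).add (hg2.const_mul (l / 2 * η ^ 2))
    rw [integral_add (integrable_const (L θ)) h2,
      integral_add (hinner.const_mul (-η)) (hg2.const_mul (l / 2 * η ^ 2)),
      integral_const_mul _ _, integral_const_mul _ _, hEinner]
    simp
  -- second moment decomposition
  have hw : ∀ ω, ‖g ω‖ ^ 2 = ‖g ω - G‖ ^ 2 + (2 * ⟪G, g ω⟫ - ‖G‖ ^ 2) := by
    intro ω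
    have h := norm_sub_sq_real (g ω) G
    have h2 : ⟪g ω, G⟫ = ⟪G, g ω⟫ := real_inner_comm _ _
    linarith
  have hvint : Integrable (fun ω => ‖g ω - G‖ ^ 2) P := by
    have heq : (fun ω => ‖g ω - G‖ ^ 2)
        = fun ω => ‖g ω‖ ^ 2 - (2 * ⟪G, g ω⟫ - ‖G‖ ^ 2) := by
      ext ω; have := hw ω; linarith
    rw [heq]
    exact hg2.sub ((hinner.const_mul 2).sub (integrable_const _))
  have hEg2 : (∫ ω, ‖g ω‖ ^ 2 ∂P) = (∫ ω, ‖g ω - G‖ ^ 2 ∂P) + ‖G‖ ^ 2 := by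
    have h3 : Integrable (fun ω => 2 * ⟪G, g ω⟫ - ‖G‖ ^ 2) P :=
      (hinner.const_mul 2).sub (integrable_const (‖G‖ ^ 2))
    rw [integral_congr_ae (ae_of_all P hw),
      integral_add hvint h3,
      integral_sub (hinner.const_mul 2) (integrable_const (‖G‖ ^ 2)),
      integral_const_mul _ _, hEinner]
    simp
    ring
  set V := ∫ ω, ‖g ω - G‖ ^ 2 ∂P with hVdef
  have hVnn : 0 ≤ V := by
    rw [hVdef]; exact integral_nonneg fun ω => by positivity
  have hPLθ : μpl * (L θ - Lstar) ≤ 1 / 2 * ‖G‖ ^ 2 := hPL θ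
  have hGnn : (0:ℝ) ≤ ‖G‖ ^ 2 := by positivity
  have k1 : l * η ≤ 1 := by
    have := (le_div_iff₀ hl).mp hη1
    linarith
  have k2l : η * (l * α) ≤ μpl * B := (le_div_iff₀ (by positivity)).mp hη2
  -- the three estimates
  have s1 : l / 2 * η ^ 2 * ‖G‖ ^ 2 ≤ η / 2 * ‖G‖ ^ 2 := by
    apply mul_le_mul_of_nonneg_right _ hGnn
    nlinarith
  have s2 : η * (μpl * (L θ - Lstar)) ≤ η * (1 / 2 * ‖G‖ ^ 2) :=
    mul_le_mul_of_nonneg_left hPLθ hηpos.le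
  have s3 : l / 2 * η ^ 2 * V ≤ l / 2 * η ^ 2 * ((α / B) * (L θ - Lstar)) :=
    mul_le_mul_of_nonneg_left hvar (by positivity)
  have s4 : l / 2 * η ^ 2 * ((α / B) * (L θ - Lstar)) ≤ μpl / 2 * η * (L θ - Lstar) := by
    have hc : (0:ℝ) ≤ η * (L θ - Lstar) / (2 * B) := by positivity
    have hm := mul_le_mul_of_nonneg_left k2l hc
    calc l / 2 * η ^ 2 * ((α / B) * (L θ - Lstar))
        = η * (L θ - Lstar) / (2 * B) * (η * (l * α)) := by field_simp
      _ ≤ η * (L θ - Lstar) / (2 * B) * (μpl * B) := hm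
      _ = μpl / 2 * η * (L θ - Lstar) := by field_simp
  have hmin : min (μpl / (2 * l)) (μpl ^ 2 * B / (2 * l * α)) = μpl / 2 * η := by
    rw [hηdef, mul_min_of_nonneg _ _ (by positivity : (0:ℝ) ≤ μpl / 2)]
    congr 1
    · field_simp
    · field_simp
  have final : (∫ ω, L (θ - η • g ω) ∂P) ≤ L θ - μpl / 2 * η * (L θ - Lstar) := by
    rw [hERHS, hEg2] at hImono
    have hsplit : l / 2 * η ^ 2 * (V + ‖G‖ ^ 2)
        = l / 2 * η ^ 2 * V + l / 2 * η ^ 2 * ‖G‖ ^ 2 := by ring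
    linarith [hImono, s1, s2, s3, s4, hsplit]
  have hexp : (1 - μpl / 2 * η) * (L θ - Lstar)
      = (L θ - Lstar) - μpl / 2 * η * (L θ - Lstar) := by ring
  rw [hmin, hexp]
  linarith
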